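/- Let α > 1 be real and define ρ(x) = ψ(eˣ)e^{−αx} for x ≥ 0, where ψ(x) = ∑_{n < x} Λ(n) is the Chebyshev function. Then for every complex s with Re s > 0, the Laplace transform L_ρ(s) = ∫₀^∞ ρ(x)e^{−sx} dx satisfies L_ρ(s) = −ζ'(s+α) / ((s+α)·ζ(s+α)). -/

import Mathlib

open MeasureTheory Set Filter

lemma cexp_intOn {σ : ℂ} (hσ : 0 < σ.re) (a : ℝ) :
    IntegrableOn (fun x : ℝ => Complex.exp (-σ * x)) (Ioi a) := by
  apply Integrable.mono' (exp_neg_integrableOn_Ioi a hσ)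
  · exact (Complex.continuous_exp.comp
      (continuous_const.mul Complex.continuous_ofReal)).aestronglyMeasurable
  · filter_upwards with x
    rw [Complex.norm_exp]
    simp [neg_mul]

lemma cexp_integral_Ioi {σ : ℂ} (hσ : 0 < σ.re) (a : ℝ) :
    ∫ x in Ioi a, Complex.exp (-σ * x) = Complex.exp (-σ * a) / σ := by
  have hσ0 : σ ≠ 0 := fun h => by simp [h] at hσ
  have key : ∀ x ∈ Ici a, HasDerivAt (fun x : ℝ => -Complex.exp (-σ * x) / σ)
      (Complex.exp (-σ * x)) x := by
    intro x _
    have h1 : HasDerivAt (fun z : ℂ => -Complex.exp (-σ * z) / σ)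
        (Complex.exp (-σ * (x : ℂ))) (x : ℂ) := by
      have := (((hasDerivAt_id (x : ℂ)).const_mul (-σ)).cexp.neg).div_const σ
      refine this.congr_deriv ?_
      field_simp
      rfl
    exact h1.comp_ofReal
  have lim : Tendsto (fun x : ℝ => -Complex.exp (-σ * x) / σ) atTop (nhds 0) := by
    rw [tendsto_zero_iff_norm_tendsto_zero]
    have h2 : Tendsto (fun x : ℝ => Real.exp (-(σ.re * x)) / ‖σ‖) atTop (nhds 0) := by
      have := (Real.tendsto_exp_neg_atTop_nhds_zero.comp
        (tendsto_id.const_mul_atTop hσ)).div_const ‖σ‖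
      simpa using this
    refine h2.congr fun x => ?_
    rw [norm_div, norm_neg, Complex.norm_exp]
    simp [neg_mul]
  have := integral_Ioi_of_hasDerivAt_of_tendsto' key (cexp_intOn hσ a) lim
  rw [this]
  field_simp
  ring

lemma rexp_integral_Ioi {b : ℝ} (hb : 0 < b) (a : ℝ) :
    ∫ x in Ioi a, Real.exp (-b * x) = Real.exp (-b * a) / b := by
  have h := cexp_integral_Ioi (σ := (b : ℂ)) (by simpa using hb) a
  have h2 := integral_ofReal (𝕜 := ℂ) (f := fun x : ℝ => Real.exp (-b * x))
    (μ := volume.restrict (Ioi a))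
  have h3 : ∀ x : ℝ, ((Real.exp (-b * x) : ℝ) : ℂ) = Complex.exp (-(b : ℂ) * x) := fun x => by
    rw [Complex.ofReal_exp]; norm_cast
  apply Complex.ofReal_injective
  calc ((∫ x in Ioi a, Real.exp (-b * x) : ℝ) : ℂ)
      = ∫ x in Ioi a, ((Real.exp (-b * x) : ℝ) : ℂ) := h2.symm
    _ = ∫ x in Ioi a, Complex.exp (-(b : ℂ) * x) :=
        integral_congr_ae (Eventually.of_forall fun x => h3 x)
    _ = Complex.exp (-(b : ℂ) * a) / b := h
    _ = ((Real.exp (-b * a) / b : ℝ) : ℂ) := by rw [Complex.ofReal_div, h3 a]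

/-- Let `α > 1` be real and define `ρ(x) = ψ(eˣ) e^{-αx}` for `x ≥ 0`, where
`ψ(x) = ∑_{1 ≤ n < x} Λ(n)` is the (left-continuous) Chebyshev summatory function of the von
Mangoldt function `Λ`.  Then for every complex `s` with `Re s > 0`, the Laplace transform
`L_ρ(s) = ∫₀^∞ ρ(x) e^{-sx} dx` satisfies `L_ρ(s) = -ζ'(s+α) / ((s+α)·ζ(s+α))`. -/
theorem stmt15 (α : ℝ) (hα : 1 < α)
    (ψ : ℝ → ℝ)
    (hψ : ∀ x : ℝ, ψ x = ∑ n ∈ Finset.Ico 1 ⌈x⌉₊, ArithmeticFunction.vonMangoldt n)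
    (ρ : ℝ → ℝ) (hρ : ∀ x : ℝ, ρ x = ψ (Real.exp x) * Real.exp (-α * x))
    (s : ℂ) (hs : 0 < s.re) :
    (∫ x in Set.Ici (0 : ℝ), (ρ x : ℂ) * Complex.exp (-s * x)) =
      -deriv riemannZeta (s + α) / ((s + α) * riemannZeta (s + α)) := by
  set Λ : ArithmeticFunction ℝ := ArithmeticFunction.vonMangoldt with hΛ
  set σ : ℂ := s + (α : ℂ) with hσdef
  have hσre : 1 < σ.re := by
    simp only [hσdef, Complex.add_re, Complex.ofReal_re]
    linarith
  have hσpos : 0 < σ.re := by linarith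
  have hσ0 : σ ≠ 0 := fun h => by rw [h] at hσpos; simp at hσpos
  set F : ℕ → ℝ → ℂ := fun n => Set.indicator (Ioi (Real.log n))
      (fun x => (Λ n : ℂ) * Complex.exp (-σ * x)) with hF
  -- integrability
  have hFint : ∀ n, Integrable (F n) (volume.restrict (Ici (0 : ℝ))) := fun n =>
    (MeasureTheory.IntegrableOn.integrable_indicator
      ((cexp_intOn hσpos (Real.log n)).const_mul _) measurableSet_Ioi).restrict
  -- value of each integral
  have hterm : ∀ n : ℕ, 0 < n →
      LSeries.term (fun m => (Λ m : ℂ)) σ n = (Λ n : ℂ) / (n : ℂ) ^ σ := by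
    intro n hn
    rw [LSeries.term_of_ne_zero hn.ne']
  have key : ∀ n : ℕ, ∫ x in Ici (0 : ℝ), F n x
      = LSeries.term (fun m => (Λ m : ℂ)) σ n / σ := by
    intro n
    rcases Nat.eq_zero_or_pos n with rfl | hn
    · simp [hF, LSeries.term]
    have hn0 : (0 : ℝ) < n := by exact_mod_cast hn
    have hlog : 0 ≤ Real.log n := Real.log_nonneg (by exact_mod_cast hn)
    have hsub : Ioi (Real.log n) ⊆ Ici (0 : ℝ) := fun y hy => le_of_lt (lt_of_le_of_lt hlog hy)
    rw [hF]
    rw [setIntegral_indicator measurableSet_Ioi, Set.inter_eq_self_of_subset_right hsub,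
      integral_const_mul, cexp_integral_Ioi hσpos, hterm n hn]
    have hexp : Complex.exp (-σ * Real.log n) = ((n : ℂ) ^ σ)⁻¹ := by
      rw [← Complex.cpow_neg, Complex.cpow_def_of_ne_zero (by exact_mod_cast hn0.ne' : (n : ℂ) ≠ 0)]
      congr 1
      rw [show ((n : ℕ) : ℂ) = ((n : ℝ) : ℂ) by push_cast; ring,
        ← Complex.ofReal_log (le_of_lt hn0)]
      ring
    rw [hexp]
    field_simp
  -- norms of integrals
  have hnormint : ∀ n : ℕ, ∫ x in Ici (0 : ℝ), ‖F n x‖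
      = ‖LSeries.term (fun m => (Λ m : ℂ)) σ n‖ / σ.re := by
    intro n
    rcases Nat.eq_zero_or_pos n with rfl | hn
    · simp [hF, LSeries.term]
    have hn0 : (0 : ℝ) < n := by exact_mod_cast hn
    have hΛnn : 0 ≤ Λ n := ArithmeticFunction.vonMangoldt_nonneg
    have hlog : 0 ≤ Real.log n := Real.log_nonneg (by exact_mod_cast hn)
    have hsub : Ioi (Real.log n) ⊆ Ici (0 : ℝ) := fun y hy => le_of_lt (lt_of_le_of_lt hlog hy)
    have hnorm : ∀ x : ℝ, ‖F n x‖
        = Set.indicator (Ioi (Real.log n)) (fun x => Λ n * Real.exp (-σ.re * x)) x := by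
      intro x
      rw [hF, norm_indicator_eq_indicator_norm]
      simp only [Set.indicator_apply]
      split_ifs with hxm
      · rw [norm_mul, Complex.norm_real, Real.norm_eq_abs, Complex.norm_exp,
          abs_of_nonneg hΛnn]
        simp [neg_mul]
      · rfl
    simp_rw [hnorm]
    rw [setIntegral_indicator measurableSet_Ioi, Set.inter_eq_self_of_subset_right hsub,
      MeasureTheory.integral_const_mul, rexp_integral_Ioi hσpos, hterm n hn]
    have hcpow : ‖(n : ℂ) ^ σ‖ = (n : ℝ) ^ σ.re := by
      rw [show ((n : ℕ) : ℂ) = ((n : ℝ) : ℂ) by push_cast; ring,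
        Complex.norm_cpow_eq_rpow_re_of_pos hn0]
    rw [norm_div, hcpow, Complex.norm_real, Real.norm_eq_abs, abs_of_nonneg hΛnn]
    have hrexp : Real.exp (-σ.re * Real.log n) = ((n : ℝ) ^ σ.re)⁻¹ := by
      rw [← Real.rpow_neg (le_of_lt hn0), Real.rpow_def_of_pos hn0]
      ring_nf
    rw [hrexp]
    field_simp
  have hsum : Summable (fun n => ∫ x in Ici (0 : ℝ), ‖F n x‖) := by
    have hL : Summable (fun n => ‖LSeries.term (fun m => (Λ m : ℂ)) σ n‖) :=
      (ArithmeticFunction.LSeriesSummable_vonMangoldt hσre).norm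
    simpa only [hnormint] using hL.div_const σ.re
  -- pointwise identity
  have hpt : EqOn (fun x : ℝ => (ρ x : ℂ) * Complex.exp (-s * x))
      (fun x : ℝ => ∑' n, F n x) (Ici (0 : ℝ)) := by
    intro x hx
    have hts : ∑' n, F n x = ∑ n ∈ Finset.Ico 1 ⌈Real.exp x⌉₊,
        ((Λ n : ℂ) * Complex.exp (-σ * x)) := by
      rw [tsum_eq_sum (s := Finset.Ico 1 ⌈Real.exp x⌉₊) ?_]
      · refine Finset.sum_congr rfl fun n hn => ?_
        obtain ⟨hn1, hn2⟩ := Finset.mem_Ico.mp hn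
        have h1 : (n : ℝ) < Real.exp x := by exact_mod_cast Nat.lt_ceil.mp hn2
        have h2 : Real.log n < x := by
          rw [Real.log_lt_iff_lt_exp (by exact_mod_cast hn1)]
          exact h1
        rw [hF]
        simp [Set.indicator_of_mem (mem_Ioi.mpr h2)]
      · intro n hn
        rcases Nat.eq_zero_or_pos n with rfl | hpos
        · simp [hF]
        have hge : Real.exp x ≤ n := by
          have : ⌈Real.exp x⌉₊ ≤ n := by
            by_contra hc
            exact hn (Finset.mem_Ico.mpr ⟨hpos, not_le.mp hc⟩)
          calc Real.exp x ≤ (⌈Real.exp x⌉₊ : ℝ) := Nat.le_ceil _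
            _ ≤ n := by exact_mod_cast this
        have : x ≤ Real.log n := by
          rw [Real.le_log_iff_exp_le (by exact_mod_cast hpos)]
          exact hge
        rw [hF]
        simp [Set.indicator_of_notMem (by simpa using this.not_gt : x ∉ Ioi (Real.log n))]
    have hexp2 : ((Real.exp (-α * x) : ℝ) : ℂ) * Complex.exp (-s * x) = Complex.exp (-σ * x) := by
      rw [Complex.ofReal_exp, ← Complex.exp_add]
      congr 1
      rw [hσdef]
      push_cast
      ring
    simp only
    rw [hts, hρ, hψ]
    push_cast [Finset.sum_mul]
    refine Finset.sum_congr rfl fun n hn => ?_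
    rw [mul_assoc, ← Complex.exp_add]
    congr 2
    rw [hσdef]
    ring
  -- conclude
  calc (∫ x in Ici (0 : ℝ), (ρ x : ℂ) * Complex.exp (-s * x))
      = ∫ x in Ici (0 : ℝ), ∑' n, F n x := setIntegral_congr_fun measurableSet_Ici hpt
    _ = ∑' n, ∫ x in Ici (0 : ℝ), F n x :=
        (integral_tsum_of_summable_integral_norm hFint hsum).symm
    _ = ∑' n, LSeries.term (fun m => (Λ m : ℂ)) σ n / σ := tsum_congr key
    _ = (∑' n, LSeries.term (fun m => (Λ m : ℂ)) σ n) / σ := by rw [tsum_div_const]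
    _ = LSeries (fun m => (Λ m : ℂ)) σ / σ := rfl
    _ = (-deriv riemannZeta σ / riemannZeta σ) / σ := by
        rw [ArithmeticFunction.LSeries_vonMangoldt_eq_deriv_riemannZeta_div hσre]
    _ = -deriv riemannZeta (s + α) / ((s + α) * riemannZeta (s + α)) := by
        rw [← hσdef, div_div, mul_comm]
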